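/- If g ∈ DM(X∩r) and t is a rational subspace with t ∩ r ≠ r, then ∇_{X\t}(P_{X\r}^{F} * g) = 0 for any regular face F for X\r. -/

import Mathlib

open Function

attribute [local instance] Classical.propDecidable

noncomputable section

/-- The lattice `Γ = ι → ℤ`. -/
abbrev ZLat (ι : Type*) := ι → ℤ
/-- The ambient real vector space `V = Γ ⊗ ℝ = ι → ℝ`. -/
abbrev Amb (ι : Type*) := ι → ℝ

variable {ι : Type*} [Fintype ι]

/-- Embedding of the lattice into the ambient space. -/
def castV (γ : ZLat ι) : Amb ι := fun i => (γ i : ℝ)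

/-- Standard pairing on `V`. -/
def dotR (u v : Amb ι) : ℝ := ∑ i, u i * v i

/-- The difference operator `∇ₐ`. -/
def nab (a : ZLat ι) (f : ZLat ι → ℤ) : ZLat ι → ℤ := fun b => f b - f (b - a)

/-- `∇_Y = ∏_{a ∈ Y} ∇ₐ` for a list `Y`. -/
def nabL (Y : List (ZLat ι)) (f : ZLat ι → ℤ) : ZLat ι → ℤ := Y.foldr nab f

/-- Delta function at `0`. -/
def delta0 : ZLat ι → ℤ := fun γ => if γ = 0 then 1 else 0

/-- The partition function of a list `Y`: the number of ways of writing `γ` as a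
nonnegative integral combination of the entries of `Y`. -/
def partFn (Y : List (ZLat ι)) : ZLat ι → ℤ :=
  fun γ => Nat.card {k : Fin Y.length → ℕ // ∑ i, (k i : ℤ) • Y.get i = γ}

/-- The cone `C(Y)` of nonnegative real combinations of the entries of `Y`. -/
def coneC (Y : List (ZLat ι)) : Set (Amb ι) :=
  {v | ∃ t : Fin Y.length → ℝ, (∀ i, 0 ≤ t i) ∧ v = ∑ i, t i • castV (Y.get i)}

/-- `C(Y)` is pointed: it contains no line. -/
def PointedList (Y : List (ZLat ι)) : Prop :=
  ∀ v ∈ coneC Y, -v ∈ coneC Y → v = 0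

/-- The zonotope `B(Y) = {∑ tᵢ aᵢ : 0 ≤ tᵢ ≤ 1}`. -/
def zono (Y : List (ZLat ι)) : Set (Amb ι) :=
  {v | ∃ t : Fin Y.length → ℝ, (∀ i, 0 ≤ t i ∧ t i ≤ 1) ∧ v = ∑ i, t i • castV (Y.get i)}

/-- The real span of a list of lattice vectors. -/
def spanOf (Y : List (ZLat ι)) : Submodule ℝ (Amb ι) :=
  Submodule.span ℝ (castV '' {a | a ∈ Y})

/-- A subspace is rational (relative to `X`) if it is spanned by a sublist of `X`. -/
def IsRational (X : List (ZLat ι)) (r : Submodule ℝ (Amb ι)) : Prop :=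
  ∃ Y : List (ZLat ι), (∀ a ∈ Y, a ∈ X) ∧ r = spanOf Y

/-- The sublist `X ∩ r`. -/
def inSub (X : List (ZLat ι)) (r : Submodule ℝ (Amb ι)) : List (ZLat ι) :=
  X.filter (fun a => decide (castV a ∈ r))

/-- The sublist `X \ r`. -/
def outSub (X : List (ZLat ι)) (r : Submodule ℝ (Amb ι)) : List (ZLat ι) :=
  X.filter (fun a => decide (castV a ∉ r))

/-- The operator `∇_{X \ r}`. -/
def nabOut (X : List (ZLat ι)) (r : Submodule ℝ (Amb ι)) (f : ZLat ι → ℤ) : ZLat ι → ℤ :=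
  nabL (outSub X r) f

/-- The space `𝓕(X)`: `∇_{X\r} f` is supported on `Γ ∩ r` for every rational `r`. -/
def memF (X : List (ZLat ι)) (f : ZLat ι → ℤ) : Prop :=
  ∀ r, IsRational X r → support (nabOut X r f) ⊆ {γ | castV γ ∈ r}

/-- The Dahmen–Micchelli space of a list `Y` (inside its span): `f` is killed by
`∇_{Y \ H}` for every rational hyperplane `H` of the span of `Y`. -/
def memDM (Y : List (ZLat ι)) (f : ZLat ι → ℤ) : Prop :=
  ∀ H, IsRational Y H → Module.finrank ℝ H + 1 = Module.finrank ℝ (spanOf Y) →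
    nabOut Y H f = 0

/-- `𝓕(X ∩ r)`, viewed as functions on `Γ` supported on `Γ ∩ r`. -/
def memFrel (X : List (ZLat ι)) (r : Submodule ℝ (Amb ι)) (g : ZLat ι → ℤ) : Prop :=
  support g ⊆ {γ | castV γ ∈ r} ∧ memF (inSub X r) g

/-- `DM(X ∩ r)`, viewed as functions on `Γ` supported on `Γ ∩ r`. -/
def memDMrel (X : List (ZLat ι)) (r : Submodule ℝ (Amb ι)) (g : ZLat ι → ℤ) : Prop :=
  support g ⊆ {γ | castV γ ∈ r} ∧ memDM (inSub X r) g

/-- `u` is a regular vector for `X \ r`:  `u ∈ r^⊥` and `⟨u, a⟩ ≠ 0` for all `a ∈ X \ r`.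
It determines the regular face `F` containing it. -/
def Reg (X : List (ZLat ι)) (r : Submodule ℝ (Amb ι)) (u : Amb ι) : Prop :=
  (∀ v ∈ r, dotR u v = 0) ∧ ∀ a ∈ X, castV a ∉ r → dotR u (castV a) ≠ 0

/-- The sublist `B ⊆ X \ r` of elements negative on `u`. -/
def negPart (X : List (ZLat ι)) (r : Submodule ℝ (Amb ι)) (u : Amb ι) : List (ZLat ι) :=
  (outSub X r).filter (fun a => decide (dotR u (castV a) < 0))

/-- The list `[A, -B]`: entries of `X \ r`, with sign flipped on the part negative on `u`. -/
def signedOut (X : List (ZLat ι)) (r : Submodule ℝ (Amb ι)) (u : Amb ι) : List (ZLat ι) :=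
  (outSub X r).map (fun a => if 0 < dotR u (castV a) then a else -a)

/-- The special function `𝓟_{X\r}^F` for the face `F ∋ u`:
`(-1)^{|B|} τ_{-∑_{b∈B} b} (∏_{a∈A} ∑_k δ_{ka}) * (∏_{b∈B} ∑_k δ_{-kb})`. -/
def PF (X : List (ZLat ι)) (r : Submodule ℝ (Amb ι)) (u : Amb ι) : ZLat ι → ℤ :=
  fun γ => (-1) ^ (negPart X r u).length *
    partFn (signedOut X r u) (γ + (negPart X r u).sum)

/-- The support region `-∑_{b∈B} b + C(A, -B)` of `𝓟_{X\r}^F`, as a subset of `Γ`. -/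
def PFsupp (X : List (ZLat ι)) (r : Submodule ℝ (Amb ι)) (u : Amb ι) : Set (ZLat ι) :=
  {γ | castV (γ + (negPart X r u).sum) ∈ coneC (signedOut X r u)}

/-- Convolution of two functions on the lattice. -/
def conv (f g : ZLat ι → ℤ) : ZLat ι → ℤ := fun γ => ∑ᶠ μ, f (γ - μ) * g μ

/-- The union of all rational hyperplanes (inside the span of `Y`). -/
def hyperUnion (Y : List (ZLat ι)) : Set (Amb ι) :=
  {v | ∃ H, IsRational Y H ∧ Module.finrank ℝ H + 1 = Module.finrank ℝ (spanOf Y) ∧ v ∈ H}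

/-- A tope for `Y`: a connected component of the complement (in the span of `Y`) of the
union of the hyperplanes spanned by sublists of `Y`. -/
def IsTope (Y : List (ZLat ι)) (τ : Set (Amb ι)) : Prop :=
  ∃ v ∈ (spanOf Y : Set (Amb ι)) \ hyperUnion Y,
    τ = connectedComponentIn ((spanOf Y : Set (Amb ι)) \ hyperUnion Y) v

/-- The set of singular vectors: the union of the cones `C(Y)` over sublists `Y` of `X`
not spanning `V`. -/
def singSet (X : List (ZLat ι)) : Set (Amb ι) :=
  {v | ∃ Y : List (ZLat ι), (∀ a ∈ Y, a ∈ X) ∧ spanOf Y ≠ ⊤ ∧ v ∈ coneC Y}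

/-- A big cell: a connected component of the complement of the set of singular vectors. -/
def IsBigCell (X : List (ZLat ι)) (c : Set (Amb ι)) : Prop :=
  ∃ v ∈ (singSet X)ᶜ, c = connectedComponentIn (singSet X)ᶜ v

/-- Minkowski difference of sets, `A - B`. -/
def sdiffSet (A B : Set (Amb ι)) : Set (Amb ι) := {x | ∃ a ∈ A, ∃ b ∈ B, x = a - b}

-- ================= auxiliary lemmas =================
section Aux
open List

def castHom : ZLat ι →+ Amb ι where
  toFun := castV
  map_zero' := by funext i; simp [castV]
  map_add' x y := by funext i; simp [castV]

lemma castV_sub (x y : ZLat ι) : castV (x - y) = castV x - castV y := map_sub castHom x y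
lemma castV_sum {n : ℕ} (f : Fin n → ZLat ι) :
    castV (∑ i, f i) = ∑ i, castV (f i) := map_sum castHom f Finset.univ
lemma castV_zsmul (n : ℤ) (x : ZLat ι) : castV (n • x) = n • castV x := map_zsmul castHom n x

def dotHom (u : Amb ι) : Amb ι →+ ℝ where
  toFun v := dotR u v
  map_zero' := by simp [dotR]
  map_add' x y := by simp [dotR, mul_add, Finset.sum_add_distrib]

lemma dotR_sub (u x y : Amb ι) : dotR u (x - y) = dotR u x - dotR u y := map_sub (dotHom u) x y
lemma dotR_sum (u : Amb ι) {n : ℕ} (f : Fin n → Amb ι) :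
    dotR u (∑ i, f i) = ∑ i, dotR u (f i) := map_sum (dotHom u) f Finset.univ
lemma dotR_zsmul (u : Amb ι) (n : ℤ) (x : Amb ι) : dotR u (n • x) = (n : ℝ) * dotR u x := by
  have := map_zsmul (dotHom u) n x
  exact this.trans (zsmul_eq_mul _ _)

instance : LeftCommutative (nab (ι := ι)) :=
  ⟨fun a b f => by funext c; simp only [nab]; rw [sub_right_comm c a b]; ring⟩

lemma nabL_perm {l₁ l₂ : List (ZLat ι)} (p : l₁ ~ l₂) (f : ZLat ι → ℤ) :
    nabL l₁ f = nabL l₂ f := p.foldr_eq f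

lemma nabL_append (A B : List (ZLat ι)) (f : ZLat ι → ℤ) :
    nabL (A ++ B) f = nabL A (nabL B f) := List.foldr_append ..

lemma nab_zero (a : ZLat ι) : nab a (0 : ZLat ι → ℤ) = 0 := by funext b; simp [nab]

lemma nabL_zero (L : List (ZLat ι)) : nabL L (0 : ZLat ι → ℤ) = 0 := by
  induction L with
  | nil => rfl
  | cons a L ih => show nab a (nabL L 0) = 0; rw [ih, nab_zero]

lemma exists_perm_append {α : Type*} {l₁ l₂ : List α} (h : l₁ <+ l₂) :
    ∃ D, l₂ ~ l₁ ++ D := by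
  induction h with
  | slnil => exact ⟨[], by simp⟩
  | @cons l₁ l₂ a _ ih =>
      obtain ⟨D, hD⟩ := ih
      exact ⟨a :: D, (hD.cons a).trans (List.perm_middle).symm⟩
  | @cons_cons l₁ l₂ a _ ih =>
      obtain ⟨D, hD⟩ := ih
      exact ⟨D, hD.cons a⟩

lemma spanOf_mono {Z Y : List (ZLat ι)} (h : ∀ a ∈ Z, a ∈ Y) : spanOf Z ≤ spanOf Y := by
  apply Submodule.span_le.2
  rintro - ⟨a, ha, rfl⟩
  exact Submodule.subset_span ⟨a, h a ha, rfl⟩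

lemma mem_spanOf {Y : List (ZLat ι)} {a : ZLat ι} (h : a ∈ Y) : castV a ∈ spanOf Y :=
  Submodule.subset_span ⟨a, h, rfl⟩

lemma exists_hyperplane (Y : List (ZLat ι)) (Z : List (ZLat ι)) (hZY : ∀ a ∈ Z, a ∈ Y)
    (hne : spanOf Z ≠ spanOf Y) :
    ∃ H, IsRational Y H ∧ Module.finrank ℝ H + 1 = Module.finrank ℝ (spanOf Y) ∧
      spanOf Z ≤ H := by
  obtain ⟨n, hn⟩ : ∃ n, Module.finrank ℝ (spanOf Y) - Module.finrank ℝ (spanOf Z) ≤ n :=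
    ⟨_, le_rfl⟩
  induction n generalizing Z with
  | zero =>
      exfalso
      have hlt : spanOf Z < spanOf Y := lt_of_le_of_ne (spanOf_mono hZY) hne
      have := Submodule.finrank_lt_finrank_of_lt hlt
      omega
  | succ n ih =>
      have hlt : spanOf Z < spanOf Y := lt_of_le_of_ne (spanOf_mono hZY) hne
      have hrk : Module.finrank ℝ (spanOf Z) < Module.finrank ℝ (spanOf Y) :=
        Submodule.finrank_lt_finrank_of_lt hlt
      by_cases hco : Module.finrank ℝ (spanOf Z) + 1 = Module.finrank ℝ (spanOf Y)
      · exact ⟨spanOf Z, ⟨Z, hZY, rfl⟩, hco, le_rfl⟩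
      · obtain ⟨a, haY, haZ⟩ : ∃ a ∈ Y, castV a ∉ spanOf Z := by
          by_contra hc
          push_neg at hc
          refine hne.symm (le_antisymm ?_ (spanOf_mono hZY)) |>.elim
          apply Submodule.span_le.2
          rintro - ⟨a, ha, rfl⟩
          exact hc a ha
        have ha0 : castV a ≠ 0 := fun h => haZ (h ▸ (spanOf Z).zero_mem)
        have hsp : spanOf (a :: Z) = Submodule.span ℝ {castV a} ⊔ spanOf Z := by
          unfold spanOf
          have hset : {x : ZLat ι | x ∈ a :: Z} = insert a {x | x ∈ Z} := by ext x; simp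
          rw [hset, Set.image_insert_eq, Submodule.span_insert]
        have hle : Module.finrank ℝ (spanOf (a :: Z)) ≤ Module.finrank ℝ (spanOf Z) + 1 := by
          have := Submodule.finrank_sup_add_finrank_inf_eq (Submodule.span ℝ {castV a}) (spanOf Z)
          rw [hsp, finrank_span_singleton ha0] at *
          omega
        have hltZ : spanOf Z < spanOf (a :: Z) := by
          refine lt_of_le_of_ne (spanOf_mono (fun b hb => List.mem_cons_of_mem a hb)) ?_
          intro h
          exact haZ (h ▸ mem_spanOf (List.mem_cons_self (a := a) (l := Z)))
        have hgt := Submodule.finrank_lt_finrank_of_lt hltZ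
        obtain ⟨H, h1, h2, h3⟩ := ih (a :: Z)
          (fun b hb => by rcases List.mem_cons.1 hb with rfl | hb; exacts [haY, hZY b hb])
          (by
            intro h
            rw [h] at hle
            omega)
          (by omega)
        exact ⟨H, h1, h2, le_trans (le_of_lt hltZ) h3⟩

lemma spanOf_inSub {X : List (ZLat ι)} {r : Submodule ℝ (Amb ι)} (hr : IsRational X r) :
    spanOf (inSub X r) = r := by
  obtain ⟨Y₀, hY₀, rfl⟩ := hr
  refine le_antisymm ?_ ?_
  · apply Submodule.span_le.2
    rintro - ⟨a, ha, rfl⟩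
    have := List.of_mem_filter (by exact ha)
    simpa using this
  · refine le_trans (le_of_eq rfl) (spanOf_mono (Z := Y₀) ?_)
    intro a ha
    refine List.mem_filter.2 ⟨hY₀ a ha, by simp [mem_spanOf ha]⟩

lemma signedOut_pos {X : List (ZLat ι)} {r : Submodule ℝ (Amb ι)} {u : Amb ι}
    (hu : Reg X r u) : ∀ v ∈ signedOut X r u, 0 < dotR u (castV v) := by
  intro v hv
  obtain ⟨a, ha, rfl⟩ := List.mem_map.1 hv
  have ha' := List.mem_filter.1 ha
  have hne : dotR u (castV a) ≠ 0 := hu.2 a ha'.1 (by simpa using ha'.2)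
  by_cases h : 0 < dotR u (castV a)
  · simpa [h] using h
  · have hneg : dotR u (castV a) < 0 := lt_of_le_of_ne (not_lt.1 h) hne
    have hcn : castV (-a) = -castV a := by funext i; simp [castV]
    simp only [if_neg h, hcn]
    have : dotR u (-castV a) = -dotR u (castV a) := by
      simp [dotR, Finset.sum_neg_distrib]
    rw [this]; linarith

lemma PF_fin {X : List (ZLat ι)} {r : Submodule ℝ (Amb ι)} {u : Amb ι}
    (hu : Reg X r u) (γ : ZLat ι) :
    {μ : ZLat ι | PF X r u (γ - μ) ≠ 0 ∧ dotR u (castV μ) = 0}.Finite := by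
  set V := signedOut X r u with hV
  set s := (negPart X r u).sum with hs
  set C := dotR u (castV (γ + s)) with hC
  set d : Fin V.length → ℝ := fun i => dotR u (castV (V.get i)) with hd
  have hdpos : ∀ i, 0 < d i := fun i => signedOut_pos hu _ (V.get_mem i)
  have hK : (Set.pi Set.univ (fun i : Fin V.length => Set.Iic (⌊C / d i⌋₊))).Finite :=
    Set.Finite.pi (fun i => Set.finite_Iic _)
  refine Set.Finite.subset (hK.image (fun k => γ + s - ∑ i, (k i : ℤ) • V.get i)) ?_
  rintro μ ⟨hμ1, hμ2⟩
  have hpf : partFn V (γ - μ + s) ≠ 0 := by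
    intro h
    apply hμ1
    simp [PF, ← hV, ← hs, h]
  have hne : Nonempty {k : Fin V.length → ℕ // ∑ i, (k i : ℤ) • V.get i = γ - μ + s} := by
    by_contra h
    rw [not_nonempty_iff] at h
    exact hpf (by simp [partFn, Nat.card_of_isEmpty])
  obtain ⟨k, hk⟩ := hne
  have hsum : ∑ i, (k i : ℝ) * d i = C := by
    have e1 : dotR u (castV (∑ i, (k i : ℤ) • V.get i)) = ∑ i, (k i : ℝ) * d i := by
      rw [castV_sum, dotR_sum]
      refine Finset.sum_congr rfl fun i _ => ?_
      rw [castV_zsmul, dotR_zsmul]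
      push_cast
      rfl
    rw [hk] at e1
    rw [← e1]
    rw [show γ - μ + s = (γ + s) - μ from by abel, castV_sub, dotR_sub, hμ2, sub_zero]
  refine ⟨k, ?_, ?_⟩
  · intro i _
    have hone : (k i : ℝ) * d i ≤ C := by
      rw [← hsum]
      exact Finset.single_le_sum (fun j _ => mul_nonneg (Nat.cast_nonneg _) (hdpos j).le)
        (Finset.mem_univ i)
    have : (k i : ℝ) ≤ C / d i := (le_div_iff₀ (hdpos i)).2 hone
    exact Nat.le_floor this
  · show γ + s - ∑ i, (k i : ℤ) • V.get i = μ
    rw [hk]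
    abel

end Aux


section Conv
variable {X : List (ZLat ι)} {r : Submodule ℝ (Amb ι)} {u : Amb ι}

lemma conv_zero (f : ZLat ι → ℤ) : conv f 0 = 0 := by
  funext γ; simp [conv]

lemma supp_nab {h : ZLat ι → ℤ} (hs : support h ⊆ {γ | castV γ ∈ r}) {a : ZLat ι}
    (ha : castV a ∈ r) : support (nab a h) ⊆ {γ | castV γ ∈ r} := by
  intro γ hγ
  simp only [mem_support, nab] at hγ
  by_cases h1 : h γ = 0
  · have h2 : h (γ - a) ≠ 0 := fun h2 => hγ (by rw [h1, h2, sub_zero])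
    have := hs h2
    have : castV (γ - a) ∈ r := this
    have : castV γ ∈ r := by
      have hγa : castV γ = castV (γ - a) + castV a := by
        rw [castV_sub]; abel
      rw [hγa]; exact r.add_mem this ha
    exact this
  · exact hs h1

lemma conv_nab (hu : Reg X r u) {h : ZLat ι → ℤ} (hs : support h ⊆ {γ | castV γ ∈ r})
    {a : ZLat ι} (ha : castV a ∈ r) :
    conv (PF X r u) (nab a h) = nab a (conv (PF X r u) h) := by
  funext γ
  set f := PF X r u with hf
  have hfin := PF_fin hu (X := X) γ
  have h1 : support (fun μ => f (γ - μ) * h μ) ⊆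
      {μ : ZLat ι | PF X r u (γ - μ) ≠ 0 ∧ dotR u (castV μ) = 0} := by
    intro μ hμ
    simp only [mem_support] at hμ
    have hf1 : f (γ - μ) ≠ 0 := fun h' => hμ (by rw [h', zero_mul])
    have hh1 : h μ ≠ 0 := fun h' => hμ (by rw [h', mul_zero])
    exact ⟨hf1, hu.1 _ (hs hh1)⟩
  have h2 : support (fun μ => f (γ - μ) * h (μ - a)) ⊆
      {μ : ZLat ι | PF X r u (γ - μ) ≠ 0 ∧ dotR u (castV μ) = 0} := by
    intro μ hμ
    simp only [mem_support] at hμ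
    have hf1 : f (γ - μ) ≠ 0 := fun h' => hμ (by rw [h', zero_mul])
    have hh1 : h (μ - a) ≠ 0 := fun h' => hμ (by rw [h', mul_zero])
    refine ⟨hf1, hu.1 _ ?_⟩
    have : castV (μ - a) ∈ r := hs hh1
    have hμa : castV μ = castV (μ - a) + castV a := by rw [castV_sub]; abel
    rw [hμa]; exact r.add_mem this ha
  have key : conv f (nab a h) γ =
      (∑ᶠ μ, f (γ - μ) * h μ) - ∑ᶠ μ, f (γ - μ) * h (μ - a) := by
    rw [show conv f (nab a h) γ = ∑ᶠ μ, (f (γ - μ) * h μ - f (γ - μ) * h (μ - a)) from by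
      simp [conv, nab, mul_sub]]
    exact finsum_sub_distrib (hfin.subset h1) (hfin.subset h2)
  have reindex : (∑ᶠ μ, f (γ - μ) * h (μ - a)) = ∑ᶠ μ, f (γ - a - μ) * h μ := by
    rw [← finsum_comp_equiv (Equiv.addRight a) (f := fun μ => f (γ - μ) * h (μ - a))]
    apply finsum_congr
    intro ν
    have e1 : γ - (ν + a) = γ - a - ν := by abel
    have e2 : ν + a - a = ν := by abel
    simp only [Equiv.coe_addRight, e1, e2]
  rw [key, reindex]
  rfl

lemma supp_nabL {h : ZLat ι → ℤ} (hs : support h ⊆ {γ | castV γ ∈ r}) {L : List (ZLat ι)}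
    (hL : ∀ a ∈ L, castV a ∈ r) : support (nabL L h) ⊆ {γ | castV γ ∈ r} := by
  induction L with
  | nil => exact hs
  | cons a L ih =>
      have := supp_nab (ih (fun b hb => hL b (List.mem_cons_of_mem a hb)))
        (hL a (List.mem_cons_self (a := a) (l := L)))
      exact this

lemma conv_nabL (hu : Reg X r u) {h : ZLat ι → ℤ} (hs : support h ⊆ {γ | castV γ ∈ r})
    {L : List (ZLat ι)} (hL : ∀ a ∈ L, castV a ∈ r) :
    conv (PF X r u) (nabL L h) = nabL L (conv (PF X r u) h) := by
  induction L with
  | nil => rfl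
  | cons a L ih =>
      have hL' : ∀ b ∈ L, castV b ∈ r := fun b hb => hL b (List.mem_cons_of_mem a hb)
      show conv (PF X r u) (nab a (nabL L h)) = nab a (nabL L (conv (PF X r u) h))
      rw [conv_nab hu (supp_nabL hs hL') (hL a (List.mem_cons_self (a := a) (l := L))), ih hL']

end Conv


/-- If `g ∈ DM(X∩r)` and `t` is a rational subspace with `t ∩ r ≠ r`, then
`∇_{X\t}(𝓟_{X\r}^F * g) = 0` for any regular face `F ∋ u` for `X\r`. -/
theorem nabOut_PF_DM_zero {ι : Type*} [Fintype ι] (X : List (ZLat ι))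
    (hX0 : ∀ a ∈ X, a ≠ 0) (hspan : spanOf X = ⊤)
    (r t : Submodule ℝ (Amb ι)) (hr : IsRational X r) (ht : IsRational X t)
    (hrt : t ⊓ r ≠ r) (u : Amb ι) (hu : Reg X r u)
    (g : ZLat ι → ℤ) (hg : memDMrel X r g) :
    nabOut X t (conv (PF X r u) g) = 0 := by
  classical
  set Y := inSub X r with hY
  set Z := Y.filter (fun a => decide (castV a ∈ t)) with hZ
  have hZY : ∀ a ∈ Z, a ∈ Y := fun a ha => List.mem_of_mem_filter ha
  have hYX : ∀ a ∈ Y, a ∈ X := fun a ha => List.mem_of_mem_filter ha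
  have hYr : ∀ a ∈ Y, castV a ∈ r := fun a ha => by
    have := List.of_mem_filter ha; simpa using this
  have hsY : spanOf Y = r := spanOf_inSub hr
  have hZtr : spanOf Z ≤ t ⊓ r := by
    apply Submodule.span_le.2
    rintro - ⟨a, ha, rfl⟩
    have hat : castV a ∈ t := by have := List.of_mem_filter (by exact ha); simpa using this
    exact ⟨hat, hYr a (hZY a ha)⟩
  have hZne : spanOf Z ≠ spanOf Y := by
    intro h
    apply hrt
    refine le_antisymm inf_le_right ?_
    calc r = spanOf Y := hsY.symm
    _ = spanOf Z := h.symm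
    _ ≤ t ⊓ r := hZtr
  obtain ⟨H, hHrat, hHdim, hZH⟩ := exists_hyperplane Y Z hZY hZne
  have hgH : nabOut Y H g = 0 := hg.2 H hHrat hHdim
  -- list bookkeeping
  set pr : ZLat ι → Bool := fun a => decide (castV a ∈ r) with hpr
  set O := outSub X t with hO
  set L1 := O.filter pr with hL1
  set L2 := O.filter (fun a => !pr a) with hL2
  set C := Y.filter (fun a => decide (castV a ∉ H)) with hCdef
  have hCY : C = L1.filter (fun a => decide (castV a ∉ H)) := by
    rw [hCdef, hL1, hO, hY]
    unfold outSub inSub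
    rw [List.filter_filter, List.filter_filter, List.filter_filter]
    apply List.filter_congr
    intro a ha
    simp only [hpr, Bool.and_eq_true, decide_eq_true_eq, Bool.decide_and]
    by_cases har : castV a ∈ r
    · by_cases haH : castV a ∈ H
      · simp [haH]
      · have hat : castV a ∉ t := by
          intro hat
          apply haH
          apply hZH
          apply mem_spanOf
          rw [hZ]
          refine List.mem_filter.2 ⟨?_, by simp [hat]⟩
          rw [hY]; exact List.mem_filter.2 ⟨ha, by simp [har]⟩
        simp [haH, har, hat]
    · simp [har]
  have hCL1 : List.Sublist C L1 := by rw [hCY]; exact List.filter_sublist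
  obtain ⟨D, hD⟩ := exists_perm_append hCL1
  have hnL1g : nabL L1 g = 0 := by
    have h1 : nabL L1 g = nabL (D ++ C) g :=
      nabL_perm (hD.trans (List.perm_append_comm)) g
    rw [h1, nabL_append]
    have : nabL C g = 0 := hgH
    rw [this, nabL_zero]
  have hL1r : ∀ a ∈ L1, castV a ∈ r := fun a ha => by
    have := List.of_mem_filter ha; simpa [hpr] using this
  have hmain : nabL L1 (conv (PF X r u) g) = 0 := by
    rw [← conv_nabL hu hg.1 hL1r, hnL1g, conv_zero]
  have hOperm : List.Perm O (L2 ++ L1) :=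
    ((List.filter_append_perm pr O).symm.trans List.perm_append_comm)
  show nabL O (conv (PF X r u) g) = 0
  rw [nabL_perm hOperm, nabL_append, hmain, nabL_zero]
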